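/- Let f(u) = |u|^{p-1} u log^a(2+u²) with p > 1, a ∈ ℝ, and F(u) = ∫₀^u f(v) dv. Then there exists C > 0 such that for all u ∈ ℝ, |u f(u) − (p+1) F(u) − (2a/(p+1)) |u|^{p+1} log^{a-1}(2+u²)| ≤ C + C |u|^{p+1} log^{a-2}(2+u²). -/

import Mathlib

open Filter Real

section stmt2aux

lemma two_add_sq_pos' (v : ℝ) : (0:ℝ) < 2 + v ^ 2 := by positivity

lemma L_pos' (v : ℝ) : 0 < Real.log (2 + v ^ 2) := by
  apply Real.log_pos; nlinarith [sq_nonneg v]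

lemma abs_rpow_eq' (c v : ℝ) : |v| ^ c = (v ^ 2) ^ (c / 2) := by
  rw [← sq_abs v, ← Real.rpow_natCast |v| 2, ← Real.rpow_mul (abs_nonneg v)]
  norm_num [mul_div_cancel₀]

noncomputable def phiAux (p b : ℝ) (x : ℝ) : ℝ :=
  (p + 1) * (|x| ^ (p - 1) * x) * Real.log (2 + x ^ 2) ^ b
    + |x| ^ (p + 1) * (b * Real.log (2 + x ^ 2) ^ (b - 1) * (2 * x / (2 + x ^ 2)))

lemma hderiv' (p b : ℝ) (hp : 1 < p) (x : ℝ) :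
    HasDerivAt (fun v : ℝ => |v| ^ (p + 1) * Real.log (2 + v ^ 2) ^ b) (phiAux p b x) x := by
  have hfun : (fun v : ℝ => |v| ^ (p + 1) * Real.log (2 + v ^ 2) ^ b)
      = fun v : ℝ => (v ^ 2) ^ ((p + 1) / 2) * Real.log (2 + v ^ 2) ^ b := by
    funext v; rw [abs_rpow_eq' (p + 1) v]
  rw [hfun]
  have hsq : HasDerivAt (fun v : ℝ => v ^ 2) (2 * x) x := by
    simpa using hasDerivAt_pow 2 x
  have h1 : HasDerivAt (fun v : ℝ => (v ^ 2) ^ ((p + 1) / 2))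
      (((p + 1) / 2) * (x ^ 2) ^ ((p + 1) / 2 - 1) * (2 * x)) x :=
    (Real.hasDerivAt_rpow_const (Or.inr (by linarith))).comp x hsq
  have hinner : HasDerivAt (fun v : ℝ => 2 + v ^ 2) (2 * x) x := hsq.const_add 2
  have hlog : HasDerivAt (fun v : ℝ => Real.log (2 + v ^ 2)) ((2 + x ^ 2)⁻¹ * (2 * x)) x :=
    by have := (Real.hasDerivAt_log (ne_of_gt (two_add_sq_pos' x))).comp x hinner; exact this
  have h2 : HasDerivAt (fun v : ℝ => Real.log (2 + v ^ 2) ^ b)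
      (b * Real.log (2 + x ^ 2) ^ (b - 1) * ((2 + x ^ 2)⁻¹ * (2 * x))) x :=
    by have := (Real.hasDerivAt_rpow_const (p := b) (Or.inl (ne_of_gt (L_pos' x)))).comp x hlog; exact this
  have : HasDerivAt (fun v : ℝ => (v ^ 2) ^ ((p + 1) / 2) * Real.log (2 + v ^ 2) ^ b) _ x :=
    h1.mul h2
  convert this using 1
  have e1 : (x ^ 2) ^ ((p + 1) / 2 - 1) = |x| ^ (p - 1) := by
    rw [abs_rpow_eq' (p - 1) x]; ring_nf
  have e2 : (x ^ 2) ^ ((p + 1) / 2) = |x| ^ (p + 1) := (abs_rpow_eq' (p + 1) x).symm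
  rw [phiAux, e1, ← e2]
  field_simp

lemma phiAux_cont (p b : ℝ) (hp : 1 < p) : Continuous (phiAux p b) := by
  have hL : Continuous (fun x : ℝ => Real.log (2 + x ^ 2)) :=
    Continuous.log (by continuity) (fun x => ne_of_gt (two_add_sq_pos' x))
  have hLb : ∀ c : ℝ, Continuous (fun x : ℝ => Real.log (2 + x ^ 2) ^ c) := fun c =>
    hL.rpow_const (fun x => Or.inl (ne_of_gt (L_pos' x)))
  have habs : ∀ c : ℝ, 0 < c → Continuous (fun x : ℝ => |x| ^ c) := fun c hc =>
    continuous_abs.rpow_const (fun x => Or.inr (le_of_lt hc))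
  have hdiv : Continuous (fun x : ℝ => 2 * x / (2 + x ^ 2)) :=
    Continuous.div (by continuity) (by continuity) (fun x => ne_of_gt (two_add_sq_pos' x))
  unfold phiAux
  exact ((continuous_const.mul ((habs (p-1) (by linarith)).mul continuous_id)).mul (hLb b)).add
    ((habs (p+1) (by linarith)).mul ((continuous_const.mul (hLb (b-1))).mul hdiv))

lemma ftc_phi' (p b : ℝ) (hp : 1 < p) (u : ℝ) :
    ∫ v in (0:ℝ)..u, phiAux p b v = |u| ^ (p + 1) * Real.log (2 + u ^ 2) ^ b := by
  rw [intervalIntegral.integral_eq_sub_of_hasDerivAt (fun x _ => hderiv' p b hp x)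
    ((phiAux_cont p b hp).intervalIntegrable 0 u)]
  simp [Real.zero_rpow (show p + 1 ≠ 0 by linarith)]

lemma aux_div' (c P M l D : ℝ) (hc : 0 ≤ c) (hP : 0 ≤ P) (hM : 0 ≤ M) (hlD : l ≤ D)
    (hD : 0 < D) : c * (P * (M * l)) / D ≤ c * (P * M) := by
  rw [div_le_iff₀ hD]
  have := mul_le_mul_of_nonneg_left hlD (mul_nonneg (mul_nonneg hc hP) hM)
  nlinarith [this]

lemma R_bound' (p a : ℝ) (hp : 1 < p) (v : ℝ) :
    |phiAux p a v - (p + 1) * (|v| ^ (p - 1) * v * Real.log (2 + v ^ 2) ^ a)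
        - (2 * a / (p + 1)) * phiAux p (a - 1) v|
      ≤ (4 * |a| + 4 * |a| * |a - 1| / (p + 1))
          * (|v| ^ p * Real.log (2 + v ^ 2) ^ (a - 2)) := by
  set L := Real.log (2 + v ^ 2) with hLdef
  have hD : (0:ℝ) < 2 + v ^ 2 := two_add_sq_pos' v
  have hL : 0 < L := L_pos' v
  have hLle : L ≤ 2 + v ^ 2 := by
    have := Real.log_le_sub_one_of_pos hD; linarith
  have hA : (0:ℝ) ≤ |v| ^ (p - 1) := Real.rpow_nonneg (abs_nonneg v) _
  have hM : (0:ℝ) ≤ L ^ (a - 2) := Real.rpow_nonneg hL.le _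
  have habs2 : |v| ^ (2:ℝ) = v ^ 2 := by
    rw [show (2:ℝ) = ((2:ℕ):ℝ) by norm_num, Real.rpow_natCast, sq_abs]
  have e1 : |v| ^ (p + 1) = |v| ^ (p - 1) * v ^ 2 := by
    have h := Real.rpow_add' (abs_nonneg v) (show (p - 1) + 2 ≠ 0 by linarith)
    rw [show p - 1 + 2 = p + 1 by ring, habs2] at h
    exact h
  have e2 : |v| ^ p = |v| ^ (p - 1) * |v| := by
    have h := Real.rpow_add' (abs_nonneg v) (show (p - 1) + 1 ≠ 0 by linarith)
    rw [show p - 1 + 1 = p by ring, Real.rpow_one] at h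
    exact h
  have e3 : L ^ a = L ^ (a - 2) * L * L := by
    have h := Real.rpow_add hL (a - 1) 1
    have h' := Real.rpow_add hL (a - 2) 1
    rw [show a - 1 + 1 = a by ring, Real.rpow_one] at h
    rw [show a - 2 + 1 = a - 1 by ring, Real.rpow_one] at h'
    rw [h, h']
  have e4 : L ^ (a - 1) = L ^ (a - 2) * L := by
    have h' := Real.rpow_add hL (a - 2) 1
    rw [show a - 2 + 1 = a - 1 by ring, Real.rpow_one] at h'
    exact h'
  have e5 : L ^ (a - 1 - 1) = L ^ (a - 2) := by rw [show a - 1 - 1 = a - 2 by ring]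
  have key : phiAux p a v - (p + 1) * (|v| ^ (p - 1) * v * L ^ a)
        - (2 * a / (p + 1)) * phiAux p (a - 1) v
      = (-(4 * a)) * ((|v| ^ (p - 1) * v) * (L ^ (a - 2) * L)) / (2 + v ^ 2)
        + (-(4 * a * (a - 1) / (p + 1))) * ((|v| ^ (p - 1) * (v ^ 2 * v)) * L ^ (a - 2))
            / (2 + v ^ 2) := by
    simp only [phiAux, ← hLdef, e1, e3, e4, e5]
    have hp1 : (p:ℝ) + 1 ≠ 0 := by linarith
    field_simp
    ring
  rw [key]
  have h1 : |(-(4 * a)) * ((|v| ^ (p - 1) * v) * (L ^ (a - 2) * L)) / (2 + v ^ 2)|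
      ≤ 4 * |a| * (|v| ^ p * L ^ (a - 2)) := by
    simp only [abs_div, abs_mul, abs_neg, abs_abs, abs_of_nonneg hA, abs_of_nonneg hM,
      abs_of_pos hL, abs_of_pos hD, show |(4:ℝ)| = 4 from by norm_num]
    calc 4 * |a| * (|v| ^ (p - 1) * |v| * (L ^ (a - 2) * L)) / (2 + v ^ 2)
        = (4 * |a|) * ((|v| ^ (p - 1) * |v|) * (L ^ (a - 2) * L)) / (2 + v ^ 2) := by ring
      _ ≤ (4 * |a|) * ((|v| ^ (p - 1) * |v|) * L ^ (a - 2)) := by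
          exact aux_div' _ _ _ _ _ (by positivity) (by positivity) hM hLle hD
      _ = 4 * |a| * (|v| ^ p * L ^ (a - 2)) := by rw [e2]
  have h2 : |(-(4 * a * (a - 1) / (p + 1))) * ((|v| ^ (p - 1) * (v ^ 2 * v)) * L ^ (a - 2))
        / (2 + v ^ 2)|
      ≤ (4 * |a| * |a - 1| / (p + 1)) * (|v| ^ p * L ^ (a - 2)) := by
    simp only [abs_div, abs_mul, abs_neg, abs_abs, abs_of_nonneg hA, abs_of_nonneg hM,
      abs_of_pos hL, abs_of_pos hD, abs_of_nonneg (sq_nonneg v),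
      abs_of_pos (show (0:ℝ) < p + 1 by linarith), show |(4:ℝ)| = 4 from by norm_num]
    calc 4 * |a| * |a - 1| / (p + 1) * (|v| ^ (p - 1) * (v ^ 2 * |v|) * L ^ (a - 2))
          / (2 + v ^ 2)
        = (4 * |a| * |a - 1| / (p + 1)) * ((|v| ^ (p - 1) * |v|) * (L ^ (a - 2) * v ^ 2))
            / (2 + v ^ 2) := by ring
      _ ≤ (4 * |a| * |a - 1| / (p + 1)) * ((|v| ^ (p - 1) * |v|) * L ^ (a - 2)) := by
          exact aux_div' _ _ _ _ _ (by positivity) (by positivity) hM (by nlinarith) hD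
      _ = (4 * |a| * |a - 1| / (p + 1)) * (|v| ^ p * L ^ (a - 2)) := by rw [e2]
  calc _ ≤ _ := abs_add_le _ _
    _ ≤ 4 * |a| * (|v| ^ p * L ^ (a - 2))
        + (4 * |a| * |a - 1| / (p + 1)) * (|v| ^ p * L ^ (a - 2)) := add_le_add h1 h2
    _ = _ := by ring

lemma psi_lower' (p a : ℝ) (hp : 1 < p) (v : ℝ)
    (hv : Real.exp (2 * |a - 2| / p + 1) ≤ v) :
    |v| ^ p * Real.log (2 + v ^ 2) ^ (a - 2) ≤ phiAux p (a - 2) v := by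
  have hp0 : (0:ℝ) < p := by linarith
  have hv1 : (1:ℝ) ≤ v := by
    have h0 : (0:ℝ) ≤ 2 * |a - 2| / p := by positivity
    have : Real.exp 0 ≤ Real.exp (2 * |a - 2| / p + 1) :=
      Real.exp_le_exp.mpr (by linarith)
    simpa using this.trans hv
  have hvpos : (0:ℝ) < v := by linarith
  have habsv : |v| = v := abs_of_pos hvpos
  set L := Real.log (2 + v ^ 2) with hLdef
  have hL : 0 < L := L_pos' v
  have hD : (0:ℝ) < 2 + v ^ 2 := two_add_sq_pos' v
  have hL2 : 2 * |a - 2| ≤ p * L := by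
    have hexp : Real.log (Real.exp (2 * |a - 2| / p + 1) ^ 2) ≤ L := by
      apply Real.log_le_log (by positivity)
      nlinarith [hv, Real.exp_pos (2 * |a - 2| / p + 1)]
    rw [Real.log_pow, Real.log_exp] at hexp
    push_cast at hexp
    have hdq : 4 * |a - 2| / p = 2 * (2 * |a - 2| / p) := by ring
    have h5 : 4 * |a - 2| ≤ (L - 2) * p :=
      (div_le_iff₀ hp0).mp (by rw [hdq]; linarith : 4 * |a - 2| / p ≤ L - 2)
    nlinarith [abs_nonneg (a - 2), hp0]
  have ev : v ^ (p - 1) * v = v ^ p := by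
    have h := Real.rpow_add hvpos (p - 1) 1
    rw [show p - 1 + 1 = p by ring, Real.rpow_one] at h
    exact h.symm
  have ev2 : v ^ (p + 1) = v ^ p * v := by
    have h := Real.rpow_add hvpos p 1
    rw [Real.rpow_one] at h
    exact h
  have eL : L ^ (a - 2) = L ^ (a - 3) * L := by
    have h := Real.rpow_add hL (a - 3) 1
    rw [show a - 3 + 1 = a - 2 by ring, Real.rpow_one] at h
    exact h
  have eL3 : L ^ (a - 2 - 1) = L ^ (a - 3) := by rw [show a - 2 - 1 = a - 3 by ring]
  have hP : (0:ℝ) < v ^ p := Real.rpow_pos_of_pos hvpos p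
  have hm : (0:ℝ) < L ^ (a - 3) := Real.rpow_pos_of_pos hL _
  simp only [phiAux, habsv, ev, ev2, eL, eL3, ← hLdef]
  set P := v ^ p
  set m := L ^ (a - 3)
  have hq1 : v ^ 2 / (2 + v ^ 2) ≤ 1 := by rw [div_le_one hD]; linarith
  have hq0 : (0:ℝ) ≤ v ^ 2 / (2 + v ^ 2) := by positivity
  set q := v ^ 2 / (2 + v ^ 2) with hqdef
  have grepr : (P * v) * ((a - 2) * m * (2 * v / (2 + v ^ 2)))
      = 2 * (a - 2) * (P * m) * q := by
    rw [hqdef]; field_simp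
  calc P * (m * L) ≤ (p + 1) * P * (m * L) + 2 * (a - 2) * (P * m) * q := by
        nlinarith [mul_nonneg (sub_nonneg.mpr hL2) (mul_nonneg hP.le hm.le),
          mul_nonneg (mul_nonneg (sub_nonneg.mpr hq1) (abs_nonneg (a - 2)))
            (mul_nonneg hP.le hm.le),
          mul_nonneg (mul_nonneg
            (by linarith [neg_abs_le (a - 2)] : (0:ℝ) ≤ a - 2 + |a - 2|)
            (mul_nonneg hP.le hm.le)) hq0]
    _ = (p + 1) * P * (m * L) + P * v * ((a - 2) * m * (2 * v / (2 + v ^ 2))) := by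
        rw [grepr]

noncomputable def Bf (p a : ℝ) (v : ℝ) : ℝ :=
  (4 * |a| + 4 * |a| * |a - 1| / (p + 1)) * (|v| ^ p * Real.log (2 + v ^ 2) ^ (a - 2))

lemma Bf_nonneg (p a : ℝ) (hp : 1 < p) (v : ℝ) : 0 ≤ Bf p a v := by
  unfold Bf
  have hK : (0:ℝ) ≤ 4 * |a| + 4 * |a| * |a - 1| / (p + 1) :=
    add_nonneg (by positivity) (div_nonneg (by positivity) (by linarith))
  exact mul_nonneg hK (mul_nonneg (Real.rpow_nonneg (abs_nonneg v) _)
    (Real.rpow_nonneg (L_pos' v).le _))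

lemma Bf_cont (p a : ℝ) (hp : 1 < p) : Continuous (Bf p a) := by
  have hL : Continuous (fun x : ℝ => Real.log (2 + x ^ 2)) :=
    Continuous.log (by continuity) (fun x => ne_of_gt (two_add_sq_pos' x))
  have hLb : Continuous (fun x : ℝ => Real.log (2 + x ^ 2) ^ (a - 2)) :=
    hL.rpow_const (fun x => Or.inl (ne_of_gt (L_pos' x)))
  have habs : Continuous (fun x : ℝ => |x| ^ p) :=
    continuous_abs.rpow_const (fun x => Or.inr (by linarith))
  exact continuous_const.mul (habs.mul hLb)

lemma Bf_even (p a : ℝ) (v : ℝ) : Bf p a (-v) = Bf p a v := by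
  simp [Bf, neg_pow]

lemma intB (p a : ℝ) (hp : 1 < p) (u : ℝ) (hu : 0 ≤ u) :
    ∫ v in (0:ℝ)..u, Bf p a v
      ≤ (∫ v in (0:ℝ)..(Real.exp (2 * |a - 2| / p + 1)), Bf p a v)
        + (4 * |a| + 4 * |a| * |a - 1| / (p + 1))
            * (|u| ^ (p + 1) * Real.log (2 + u ^ 2) ^ (a - 2)) := by
  set v0 := Real.exp (2 * |a - 2| / p + 1) with hv0def
  have hv0pos : 0 < v0 := Real.exp_pos _
  set K := 4 * |a| + 4 * |a| * |a - 1| / (p + 1) with hKdef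
  have hK : (0:ℝ) ≤ K :=
    add_nonneg (by positivity) (div_nonneg (by positivity) (by linarith))
  have hBint : ∀ x y : ℝ, IntervalIntegrable (Bf p a) MeasureTheory.volume x y :=
    fun x y => (Bf_cont p a hp).intervalIntegrable x y
  have hPsi_nonneg : ∀ w : ℝ, 0 ≤ |w| ^ (p + 1) * Real.log (2 + w ^ 2) ^ (a - 2) :=
    fun w => mul_nonneg (Real.rpow_nonneg (abs_nonneg w) _)
      (Real.rpow_nonneg (L_pos' w).le _)
  rcases le_total u v0 with hcase | hcase
  · have hsplit : (∫ v in (0:ℝ)..u, Bf p a v) + (∫ v in u..v0, Bf p a v)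
        = ∫ v in (0:ℝ)..v0, Bf p a v :=
      intervalIntegral.integral_add_adjacent_intervals (hBint 0 u) (hBint u v0)
    have h2 : 0 ≤ ∫ v in u..v0, Bf p a v :=
      intervalIntegral.integral_nonneg hcase (fun x _ => Bf_nonneg p a hp x)
    have h3 : 0 ≤ K * (|u| ^ (p + 1) * Real.log (2 + u ^ 2) ^ (a - 2)) :=
      mul_nonneg hK (hPsi_nonneg u)
    linarith
  · have hsplit : (∫ v in (0:ℝ)..v0, Bf p a v) + (∫ v in v0..u, Bf p a v)
        = ∫ v in (0:ℝ)..u, Bf p a v :=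
      intervalIntegral.integral_add_adjacent_intervals (hBint 0 v0) (hBint v0 u)
    have hftc : ∫ v in v0..u, phiAux p (a - 2) v
        = |u| ^ (p + 1) * Real.log (2 + u ^ 2) ^ (a - 2)
          - |v0| ^ (p + 1) * Real.log (2 + v0 ^ 2) ^ (a - 2) := by
      rw [intervalIntegral.integral_eq_sub_of_hasDerivAt
        (fun x _ => hderiv' p (a - 2) hp x)
        ((phiAux_cont p (a - 2) hp).intervalIntegrable v0 u)]
    have hmono : ∫ v in v0..u, Bf p a v ≤ ∫ v in v0..u, K * phiAux p (a - 2) v := by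
      apply intervalIntegral.integral_mono_on hcase (hBint v0 u)
        ((continuous_const.mul (phiAux_cont p (a - 2) hp)).intervalIntegrable v0 u)
      intro x hx
      have hx0 : v0 ≤ x := hx.1
      exact mul_le_mul_of_nonneg_left (psi_lower' p a hp x hx0) hK
    rw [intervalIntegral.integral_const_mul, hftc] at hmono
    have h4 : 0 ≤ K * (|v0| ^ (p + 1) * Real.log (2 + v0 ^ 2) ^ (a - 2)) :=
      mul_nonneg hK (hPsi_nonneg v0)
    nlinarith [hmono, hsplit, h4]

end stmt2aux

theorem stmt2 (p a : ℝ) (hp : 1 < p)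
    (f : ℝ → ℝ) (hf : ∀ u, f u = |u| ^ (p - 1) * u * (Real.log (2 + u ^ 2)) ^ a)
    (F : ℝ → ℝ) (hF : ∀ u, F u = ∫ v in (0:ℝ)..u, f v) :
    ∃ C > 0, ∀ u : ℝ,
      |u * f u - (p + 1) * F u -
          (2 * a / (p + 1)) * |u| ^ (p + 1) * (Real.log (2 + u ^ 2)) ^ (a - 1)| ≤
        C + C * |u| ^ (p + 1) * (Real.log (2 + u ^ 2)) ^ (a - 2) := by
  set v0 := Real.exp (2 * |a - 2| / p + 1) with hv0def
  have hv0pos : 0 < v0 := Real.exp_pos _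
  set K := 4 * |a| + 4 * |a| * |a - 1| / (p + 1) with hKdef
  have hK : (0:ℝ) ≤ K :=
    add_nonneg (by positivity) (div_nonneg (by positivity) (by linarith))
  set C0 := ∫ v in (0:ℝ)..v0, Bf p a v with hC0def
  have hC0 : 0 ≤ C0 :=
    intervalIntegral.integral_nonneg hv0pos.le (fun x _ => Bf_nonneg p a hp x)
  have hfc : Continuous f := by
    have : f = fun u => |u| ^ (p - 1) * u * (Real.log (2 + u ^ 2)) ^ a := funext hf
    rw [this]
    have hL : Continuous (fun x : ℝ => Real.log (2 + x ^ 2)) :=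
      Continuous.log (by continuity) (fun x => ne_of_gt (two_add_sq_pos' x))
    exact ((continuous_abs.rpow_const (fun x => Or.inr (by linarith))).mul
      continuous_id).mul (hL.rpow_const (fun x => Or.inl (ne_of_gt (L_pos' x))))
  refine ⟨C0 + K + 1, by linarith, fun u => ?_⟩
  set L := Real.log (2 + u ^ 2) with hLdef
  have hPsi_nonneg : ∀ w : ℝ, 0 ≤ |w| ^ (p + 1) * Real.log (2 + w ^ 2) ^ (a - 2) :=
    fun w => mul_nonneg (Real.rpow_nonneg (abs_nonneg w) _)
      (Real.rpow_nonneg (L_pos' w).le _)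
  -- step 1 : rewrite the target expression as an integral
  have hmul : u * f u = |u| ^ (p + 1) * L ^ a := by
    rw [hf u]
    have habs2 : |u| ^ (2:ℝ) = u ^ 2 := by
      rw [show (2:ℝ) = ((2:ℕ):ℝ) by norm_num, Real.rpow_natCast, sq_abs]
    have e1 : |u| ^ (p + 1) = |u| ^ (p - 1) * u ^ 2 := by
      have h := Real.rpow_add' (abs_nonneg u) (show (p - 1) + 2 ≠ 0 by linarith)
      rw [show p - 1 + 2 = p + 1 by ring, habs2] at h
      exact h
    rw [e1, ← hLdef]
    ring
  have hbig : u * f u - (p + 1) * F u - (2 * a / (p + 1)) * |u| ^ (p + 1) * L ^ (a - 1)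
      = ∫ v in (0:ℝ)..u,
          (phiAux p a v - (p + 1) * f v - (2 * a / (p + 1)) * phiAux p (a - 1) v) := by
    have hint1 : IntervalIntegrable (phiAux p a) MeasureTheory.volume 0 u :=
      (phiAux_cont p a hp).intervalIntegrable 0 u
    have hint2 : IntervalIntegrable (fun v => (p + 1) * f v) MeasureTheory.volume 0 u :=
      (continuous_const.mul hfc).intervalIntegrable 0 u
    have hint3 : IntervalIntegrable (fun v => (2 * a / (p + 1)) * phiAux p (a - 1) v)
        MeasureTheory.volume 0 u :=
      (continuous_const.mul (phiAux_cont p (a - 1) hp)).intervalIntegrable 0 u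
    rw [intervalIntegral.integral_sub (hint1.sub hint2) hint3,
      intervalIntegral.integral_sub hint1 hint2,
      intervalIntegral.integral_const_mul, intervalIntegral.integral_const_mul,
      ftc_phi' p a hp u, ftc_phi' p (a - 1) hp u, hmul, hF u, ← hLdef]
    ring
  -- step 2 : bound the integral
  have hbound : |∫ v in (0:ℝ)..u,
        (phiAux p a v - (p + 1) * f v - (2 * a / (p + 1)) * phiAux p (a - 1) v)|
      ≤ |∫ v in (0:ℝ)..u, Bf p a v| := by
    rw [← Real.norm_eq_abs (∫ v in (0:ℝ)..u, _)]
    apply intervalIntegral.norm_integral_le_abs_of_norm_le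
    · filter_upwards with t
      rw [Real.norm_eq_abs, hf t]
      exact R_bound' p a hp t
    · exact (Bf_cont p a hp).intervalIntegrable 0 u
  -- step 3 : bound |∫ Bf|
  have hintB : |∫ v in (0:ℝ)..u, Bf p a v|
      ≤ C0 + K * (|u| ^ (p + 1) * L ^ (a - 2)) := by
    rcases le_total 0 u with hu | hu
    · rw [abs_of_nonneg (intervalIntegral.integral_nonneg hu
        (fun x _ => Bf_nonneg p a hp x))]
      exact intB p a hp u hu
    · have hsymm : (∫ v in (0:ℝ)..u, Bf p a v) = -∫ v in u..(0:ℝ), Bf p a v :=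
        (intervalIntegral.integral_symm u 0)
      have hcomp : (∫ v in (0:ℝ)..(-u), Bf p a v) = ∫ v in u..(0:ℝ), Bf p a v := by
        rw [show (∫ v in (0:ℝ)..(-u), Bf p a v) = ∫ v in (0:ℝ)..(-u), Bf p a (-v) from
          intervalIntegral.integral_congr (fun x _ => (Bf_even p a x).symm),
          intervalIntegral.integral_comp_neg (Bf p a)]
        norm_num
      rw [hsymm, abs_neg, ← hcomp,
        abs_of_nonneg (intervalIntegral.integral_nonneg (by linarith)
          (fun x _ => Bf_nonneg p a hp x))]
      have := intB p a hp (-u) (by linarith)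
      simpa [neg_pow] using this
  rw [hbig]
  have hPsi : 0 ≤ |u| ^ (p + 1) * L ^ (a - 2) := hPsi_nonneg u
  calc _ ≤ |∫ v in (0:ℝ)..u, Bf p a v| := hbound
    _ ≤ C0 + K * (|u| ^ (p + 1) * L ^ (a - 2)) := hintB
    _ ≤ (C0 + K + 1) + (C0 + K + 1) * |u| ^ (p + 1) * L ^ (a - 2) := by nlinarith
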